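/- The function 𝓛(z) = 𝓛₂(1-z) + (1/4)(log z)² satisfies 𝓛(1/z) = -𝓛(z) for all z in ℂ not in (-∞,0]. -/

import Mathlib

open Complex

open Set Metric intervalIntegral

/-- The dilogarithm `𝓛₂(z) = -∫₀^z log(1-s)/s ds`, as an integral along the
straight path from `0` to `z`. -/
noncomputable def dilog (z : ℂ) : ℂ :=
  -∫ t in (0:ℝ)..1, Complex.log (1 - (t : ℂ) * z) / (t : ℂ)

/-- `𝓛(z) = 𝓛₂(1-z) + (1/4)(log z)²`. -/
noncomputable def scrL (z : ℂ) : ℂ := dilog (1 - z) + (1/4) * (Complex.log z)^2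

lemma dilog_zero : dilog 0 = 0 := by
  simp [dilog, Complex.log_one]


lemma slit_seg {w : ℂ} (hw : w ∈ slitPlane) {t : ℝ} (ht0 : 0 ≤ t) (ht1 : t ≤ 1) :
    1 - (t : ℂ) * (1 - w) ∈ slitPlane := by
  rw [mem_slitPlane_iff] at hw ⊢
  simp only [sub_re, sub_im, one_re, one_im, mul_re, mul_im, ofReal_re, ofReal_im,
    zero_mul, sub_zero, zero_sub, mul_zero, zero_add] at *
  rcases hw with h | h
  · left
    rcases lt_or_eq_of_le ht1 with h1 | h1
    · nlinarith [mul_nonneg ht0 h.le]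
    · subst h1; simpa using h
  · rcases eq_or_lt_of_le ht0 with h0 | h0
    · left; simp [← h0]
    · right; simpa using (mul_ne_zero (ne_of_gt h0) (by simpa using h))

lemma slit_inv {w : ℂ} (hw : w ∈ slitPlane) : w⁻¹ ∈ slitPlane := by
  have hw0 : w ≠ 0 := slitPlane_ne_zero hw
  rw [mem_slitPlane_iff] at hw ⊢
  rw [inv_re, inv_im]
  have hn : 0 < normSq w := normSq_pos.2 hw0
  rcases hw with h | h
  · left; positivity
  · right; simp only [neg_div, ne_eq, neg_eq_zero, div_eq_zero_iff]
    push_neg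
    exact ⟨h, ne_of_gt hn⟩

lemma dilog_hasDerivAt_aux {w : ℂ}
    (hw : ∀ t : ℝ, t ∈ Icc (0:ℝ) 1 → 1 - (t:ℂ) * w ∈ slitPlane) :
    HasDerivAt dilog (∫ t in (0:ℝ)..1, (1 - (t:ℂ) * w)⁻¹) w := by
  set C : Set ℂ := ((fun u : ℂ => 1 - u) ⁻¹' slitPlaneᶜ) with hC
  have hCc : IsClosed C :=
    (isOpen_slitPlane.isClosed_compl).preimage (continuous_const.sub continuous_id)
  have hC1 : (1:ℂ) ∈ C := by simp [hC, slitPlane]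
  have hCne : C.Nonempty := ⟨1, hC1⟩
  have hφc : Continuous fun t : ℝ => infDist ((t:ℂ)*w) C :=
    (continuous_infDist_pt C).comp (Complex.continuous_ofReal.mul continuous_const)
  obtain ⟨t₀, ht₀, hmin⟩ :=
    isCompact_Icc.exists_isMinOn (nonempty_Icc.2 zero_le_one) hφc.continuousOn
  set δ := infDist ((t₀:ℂ)*w) C with hδdef
  have hδ : 0 < δ := by
    rw [hδdef]
    refine (hCc.notMem_iff_infDist_pos hCne).1 ?_
    intro hmem
    exact hmem (hw t₀ ht₀)
  -- key estimates
  have key : ∀ t ∈ Icc (0:ℝ) 1, ∀ x ∈ ball w (δ/2),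
      1 - (t:ℂ)*x ∈ slitPlane ∧ δ/2 ≤ ‖1 - (t:ℂ)*x‖ := by
    intro t ht x hx
    have hdist : dist ((t:ℂ)*x) ((t:ℂ)*w) < δ/2 := by
      rw [dist_eq, ← mul_sub]
      rw [mem_ball, dist_eq] at hx
      calc ‖(t:ℂ) * (x - w)‖ = |t| * ‖x - w‖ := by
            simp [norm_mul]
        _ ≤ 1 * ‖x - w‖ := by
            apply mul_le_mul_of_nonneg_right _ (norm_nonneg _)
            rw [abs_le]; exact ⟨by linarith [ht.1], ht.2⟩
        _ < δ/2 := by simpa using hx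
    have hδt : δ ≤ infDist ((t:ℂ)*w) C := hmin ht
    constructor
    · by_contra hmem
      have : infDist ((t:ℂ)*w) C ≤ dist ((t:ℂ)*w) ((t:ℂ)*x) :=
        infDist_le_dist_of_mem hmem
      rw [dist_comm] at this
      linarith
    · have h1 : infDist ((t:ℂ)*w) C ≤ ‖1 - (t:ℂ)*w‖ := by
        have := infDist_le_dist_of_mem (x := (t:ℂ)*w) hC1
        rwa [dist_comm, dist_eq] at this
      have htri : ‖1 - (t:ℂ)*w‖ ≤
          ‖1 - (t:ℂ)*x‖ + ‖(t:ℂ)*x - (t:ℂ)*w‖ := by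
        exact norm_sub_le_norm_sub_add_norm_sub _ _ _
      rw [dist_eq] at hdist
      linarith
  -- the parametric integral
  have main := intervalIntegral.hasDerivAt_integral_of_dominated_loc_of_deriv_le
    (F := fun x (t : ℝ) => Complex.log (1 - (t:ℂ)*x) / (t:ℂ))
    (F' := fun x (t : ℝ) => -(1 - (t:ℂ)*x)⁻¹)
    (x₀ := w) (a := 0) (b := 1) (μ := MeasureTheory.volume)
    (bound := fun _ => (δ/2)⁻¹) (s := ball w (δ/2)) (ball_mem_nhds w (half_pos hδ))
    ?hFmeas ?hFint ?hF'meas ?hbound ?bint ?hdiff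
  case hFmeas =>
    refine Filter.Eventually.of_forall fun x => ?_
    exact ((Complex.measurable_log.comp
      (measurable_const.sub (Complex.measurable_ofReal.mul_const x))).div
      Complex.measurable_ofReal).aestronglyMeasurable
  case hF'meas =>
    exact ((measurable_const.sub (Complex.measurable_ofReal.mul_const w)).inv.neg).aestronglyMeasurable
  case hbound =>
    refine Filter.Eventually.of_forall fun t ht x hx => ?_
    rw [uIoc_of_le zero_le_one] at ht
    have h2 := (key t (Ioc_subset_Icc_self ht) x hx).2
    rw [norm_neg, norm_inv]
    exact inv_anti₀ (half_pos hδ) h2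
  case bint => exact intervalIntegrable_const
  case hdiff =>
    refine Filter.Eventually.of_forall fun t ht x hx => ?_
    rw [uIoc_of_le zero_le_one] at ht
    have hslit := (key t (Ioc_subset_Icc_self ht) x hx).1
    have ht0 : (t:ℂ) ≠ 0 := by exact_mod_cast (ne_of_gt ht.1)
    have inner : HasDerivAt (fun x : ℂ => 1 - (t:ℂ)*x) (-(t:ℂ)) x := by
      simpa using ((hasDerivAt_id x).const_mul (t:ℂ)).const_sub 1
    have hlog := (Complex.hasDerivAt_log hslit).comp x inner
    have hne : (1 - (t:ℂ)*x) ≠ 0 := slitPlane_ne_zero hslit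
    have := hlog.div_const (t:ℂ)
    refine this.congr_deriv ?_
    field_simp
  case hFint =>
    classical
    set f : ℝ → ℂ := fun t => Complex.log (1 - (t:ℂ)*w) / (t:ℂ) with hf
    set g : ℝ → ℂ := Function.update f 0 (-w) with hg
    have hd0 : HasDerivAt (fun s : ℝ => Complex.log (1 - (s:ℂ)*w)) (-w) 0 := by
      have inner : HasDerivAt (fun z : ℂ => 1 - z*w) (-w) 0 := by
        simpa using ((hasDerivAt_id (0:ℂ)).mul_const w).const_sub 1
      have hlog := (Complex.hasDerivAt_log (by simpa using hw 0 (by norm_num))).comp (0:ℂ) inner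
      have := hlog.comp_ofReal
      simpa using this
    have htend : Filter.Tendsto f (nhdsWithin (0:ℝ) {0}ᶜ) (nhds (-w)) := by
      have := hasDerivAt_iff_tendsto_slope.mp hd0
      refine this.congr' ?_
      filter_upwards [self_mem_nhdsWithin] with s hs
      have hs0 : s ≠ 0 := hs
      simp [slope, hf, Complex.real_smul, div_eq_inv_mul, Complex.ofReal_inv, hs0, Complex.log_one]
    have hgc : ContinuousOn g (Icc (0:ℝ) 1) := by
      intro t ht
      by_cases ht0 : t = 0
      · subst ht0
        exact (continuousAt_update_same.2 htend).continuousWithinAt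
      · refine ContinuousAt.continuousWithinAt ?_
        have hfc : ContinuousAt f t := by
          have hl : ContinuousAt (fun s : ℝ => Complex.log (1 - (s:ℂ)*w)) t :=
            ContinuousAt.clog
              ((continuous_const.sub (Complex.continuous_ofReal.mul continuous_const)).continuousAt)
              (hw t ht)
          exact hl.div Complex.continuous_ofReal.continuousAt (by exact_mod_cast ht0)
        refine hfc.congr ?_
        filter_upwards [eventually_ne_nhds ht0] with s hs
        simp [hg, Function.update_of_ne hs]
    have hgi : IntervalIntegrable g MeasureTheory.volume 0 1 := by
      apply ContinuousOn.intervalIntegrable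
      rwa [uIcc_of_le zero_le_one]
    rw [intervalIntegrable_iff] at hgi ⊢
    refine hgi.congr ?_
    filter_upwards [MeasureTheory.ae_restrict_mem measurableSet_uIoc] with t ht
    rw [uIoc_of_le zero_le_one] at ht
    simp [hg, Function.update_of_ne (ne_of_gt ht.1)]
  · have hD := main.2.neg
    refine hD.congr_deriv ?_
    simp [intervalIntegral.integral_neg]

lemma integral_eval {w : ℂ} (hw0 : w ≠ 0)
    (hw : ∀ t : ℝ, t ∈ Icc (0:ℝ) 1 → 1 - (t:ℂ) * w ∈ slitPlane) :
    ∫ t in (0:ℝ)..1, (1 - (t:ℂ) * w)⁻¹ = -Complex.log (1 - w) / w := by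
  have hderiv : ∀ t ∈ uIcc (0:ℝ) 1,
      HasDerivAt (fun s : ℝ => -Complex.log (1 - (s:ℂ)*w) / w) (1 - (t:ℂ)*w)⁻¹ t := by
    intro t ht
    rw [uIcc_of_le zero_le_one] at ht
    have inner : HasDerivAt (fun z : ℂ => 1 - z*w) (-w) ((t:ℝ):ℂ) := by
      simpa using ((hasDerivAt_id ((t:ℝ):ℂ)).mul_const w).const_sub 1
    have hlog := ((Complex.hasDerivAt_log (hw t ht)).comp ((t:ℝ):ℂ) inner).comp_ofReal
    have := (hlog.neg).div_const w
    refine this.congr_deriv ?_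
    have hne : (1 - (t:ℂ)*w) ≠ 0 := slitPlane_ne_zero (hw t ht)
    field_simp
  have hcont : ContinuousOn (fun t : ℝ => (1 - (t:ℂ)*w)⁻¹) (uIcc (0:ℝ) 1) := by
    rw [uIcc_of_le zero_le_one]
    intro t ht
    exact ((continuous_const.sub (Complex.continuous_ofReal.mul continuous_const)).continuousAt.inv₀
      (slitPlane_ne_zero (hw t ht))).continuousWithinAt
  have := intervalIntegral.integral_eq_sub_of_hasDerivAt hderiv
    (hcont.intervalIntegrable)
  rw [this]
  simp [Complex.log_one]

lemma dilog_hasDerivAt {v : ℂ} (hv : v ∈ slitPlane) (hv1 : v ≠ 1)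
    (hseg : ∀ t : ℝ, t ∈ Icc (0:ℝ) 1 → 1 - (t:ℂ) * (1 - v) ∈ slitPlane) :
    HasDerivAt dilog (-Complex.log v / (1 - v)) (1 - v) := by
  have h := dilog_hasDerivAt_aux hseg
  rwa [integral_eval (by simpa [sub_eq_zero] using (Ne.symm hv1)) hseg,
    sub_sub_cancel] at h

lemma scrL_hasDerivAt {u : ℂ} (hu : u ∈ slitPlane) (hu1 : u ≠ 1) :
    HasDerivAt scrL (Complex.log u / (1 - u) + (1/2) * Complex.log u / u) u := by
  have hu0 : u ≠ 0 := slitPlane_ne_zero hu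
  have hu1' : (1:ℂ) - u ≠ 0 := by simpa [sub_eq_zero] using Ne.symm hu1
  have d1 := (dilog_hasDerivAt hu hu1 (fun t ht => slit_seg hu ht.1 ht.2)).comp u
    ((hasDerivAt_id u).const_sub 1)
  have d2 := ((Complex.hasDerivAt_log hu).pow 2).const_mul ((1:ℂ)/4)
  have := d1.add d2
  refine this.congr_deriv ?_
  field_simp
  ring

/-- `𝓛(1/z) = -𝓛(z)` away from the branch cut `(-∞,0]`. -/
theorem scrL_inv (z : ℂ) (hz : ¬(z.im = 0 ∧ z.re ≤ 0)) :
    scrL (1/z) = -scrL z := by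
  have hzs : z ∈ slitPlane := by
    rw [mem_slitPlane_iff]
    rcases eq_or_ne z.im 0 with h | h
    · exact Or.inl (lt_of_not_ge fun hle => hz ⟨h, hle⟩)
    · exact Or.inr h
  rcases eq_or_ne z 1 with rfl | hz1
  · simp [scrL, dilog_zero, Complex.log_one]
  set g : ℝ → ℂ := fun s => 1 - (s:ℂ) * (1 - z) with hgdef
  have hgs : ∀ s ∈ Icc (0:ℝ) 1, g s ∈ slitPlane := fun s hs => slit_seg hzs hs.1 hs.2
  have hg1 : ∀ s ∈ Ioc (0:ℝ) 1, g s ≠ 1 := by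
    intro s hs h
    rw [hgdef] at h
    simp only [sub_eq_self, mul_eq_zero, sub_eq_zero] at h
    rcases h with h | h
    · exact (ne_of_gt hs.1) (by exact_mod_cast h)
    · exact hz1 h.symm
  have hgd : ∀ s : ℝ, HasDerivAt g (-(1 - z)) s := by
    intro s
    have : HasDerivAt (fun y : ℂ => 1 - y * (1 - z)) (-(1 - z)) ((s:ℝ):ℂ) := by
      simpa using ((hasDerivAt_id ((s:ℝ):ℂ)).mul_const (1 - z)).const_sub 1
    exact this.comp_ofReal
  set Φ : ℝ → ℂ := fun s => scrL (g s)⁻¹ + scrL (g s) with hΦdef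
  have Φderiv : ∀ s ∈ Ioc (0:ℝ) 1, HasDerivAt Φ 0 s := by
    intro s hs
    have hw : g s ∈ slitPlane := hgs s (Ioc_subset_Icc_self hs)
    have hw0 : g s ≠ 0 := slitPlane_ne_zero hw
    have hw1 : g s ≠ 1 := hg1 s hs
    have hwi : (g s)⁻¹ ∈ slitPlane := slit_inv hw
    have hwi1 : (g s)⁻¹ ≠ 1 := by
      rw [ne_eq, inv_eq_one]; exact hw1
    have hinv : HasDerivAt (fun y : ℝ => (g y)⁻¹) (-(g s ^ 2)⁻¹ * -(1 - z)) s :=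
      (hasDerivAt_inv hw0).comp s (hgd s)
    have h1 : HasDerivAt (fun y : ℝ => scrL ((g y)⁻¹))
        ((Complex.log (g s)⁻¹ / (1 - (g s)⁻¹) + (1/2) * Complex.log (g s)⁻¹ / (g s)⁻¹) *
          (-(g s ^ 2)⁻¹ * -(1 - z))) s :=
      (scrL_hasDerivAt hwi hwi1).comp (h₂ := scrL) s hinv
    have h2 : HasDerivAt (fun y : ℝ => scrL (g y))
        ((Complex.log (g s) / (1 - g s) + (1/2) * Complex.log (g s) / g s) * -(1 - z)) s :=
      (scrL_hasDerivAt hw hw1).comp (h₂ := scrL) s (hgd s)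
    have hsum := h1.add h2
    have hlog : Complex.log (g s)⁻¹ = -Complex.log (g s) :=
      Complex.log_inv _ (slitPlane_arg_ne_pi hw)
    refine hsum.congr_deriv ?_
    rw [hlog]
    generalize hww : g s = w at hw0 hw1 hwi1 ⊢
    have hw1' : (1:ℂ) - w ≠ 0 := sub_ne_zero.2 (Ne.symm hw1)
    have hw1'' : w - 1 ≠ 0 := sub_ne_zero.2 hw1
    have hwi1' : (1:ℂ) - w⁻¹ ≠ 0 := sub_ne_zero.2 (Ne.symm hwi1)
    field_simp
    ring
  have hΦc0 : ContinuousAt Φ 0 := by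
    have hdc : ContinuousAt dilog 0 := by
      refine (dilog_hasDerivAt_aux (w := 0) ?_).continuousAt
      intro t ht; simp [slitPlane]
    have hscrLc : ContinuousAt scrL 1 := by
      refine ContinuousAt.add ?_ ?_
      · have h1 : ContinuousAt (fun u : ℂ => 1 - u) 1 :=
          (continuous_const.sub continuous_id).continuousAt
        have h2 := ContinuousAt.comp (x := (1:ℂ)) (g := dilog) (f := fun u : ℂ => 1 - u)
          (by show ContinuousAt dilog ((1:ℂ) - 1); norm_num; exact hdc) h1
        exact h2
      · exact (((continuousAt_clog (by simp [slitPlane])).pow 2).const_mul _)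
    have hgc : Continuous g :=
      continuous_const.sub (Complex.continuous_ofReal.mul continuous_const)
    have hg0 : g 0 = 1 := by simp [hgdef]
    refine ContinuousAt.add ?_ ?_
    · have hgi : ContinuousAt (fun s => (g s)⁻¹) 0 :=
        hgc.continuousAt.inv₀ (by rw [hg0]; exact one_ne_zero)
      have h2 := ContinuousAt.comp (x := (0:ℝ)) (g := scrL) (f := fun s => (g s)⁻¹)
        (by show ContinuousAt scrL (g 0)⁻¹; rw [hg0, inv_one]; exact hscrLc) hgi
      exact h2
    · have h2 := ContinuousAt.comp (x := (0:ℝ)) (g := scrL) (f := g)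
        (by show ContinuousAt scrL (g 0); rw [hg0]; exact hscrLc) hgc.continuousAt
      exact h2
  have hconst : ∀ σ ∈ Ioc (0:ℝ) 1, Φ 1 = Φ σ := by
    intro σ hσ
    have hcont : ContinuousOn Φ (Icc σ 1) := by
      intro s hs
      exact ((Φderiv s ⟨lt_of_lt_of_le hσ.1 hs.1, hs.2⟩).continuousAt).continuousWithinAt
    have hder : ∀ s ∈ Ico σ 1, HasDerivWithinAt Φ 0 (Ici s) s := by
      intro s hs
      exact (Φderiv s ⟨lt_of_lt_of_le hσ.1 hs.1, le_of_lt hs.2⟩).hasDerivWithinAt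
    exact constant_of_has_deriv_right_zero hcont hder 1 (right_mem_Icc.2 hσ.2)
  have hΦ01 : Φ 0 = Φ 1 := by
    have h1 : Filter.Tendsto Φ (nhdsWithin 0 (Ioi 0)) (nhds (Φ 0)) :=
      hΦc0.continuousWithinAt
    have h2 : Filter.Tendsto Φ (nhdsWithin 0 (Ioi 0)) (nhds (Φ 1)) := by
      refine Filter.Tendsto.congr' ?_ tendsto_const_nhds
      filter_upwards [Ioc_mem_nhdsGT_of_mem
        (by constructor <;> norm_num : (0:ℝ) ∈ Ico 0 1)] with σ hσ
      exact hconst σ hσ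
    exact tendsto_nhds_unique h1 h2
  have hΦ0 : Φ 0 = 0 := by
    have hs1 : scrL 1 = 0 := by simp [scrL, dilog_zero, Complex.log_one]
    simp [hΦdef, hgdef, hs1]
  have hΦ1 : Φ 1 = scrL z⁻¹ + scrL z := by
    simp [hΦdef, hgdef]
  rw [one_div]
  have hfin : scrL z⁻¹ + scrL z = 0 := by rw [← hΦ1, ← hΦ01, hΦ0]
  linear_combination hfin
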